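/- Robust policy improvement of pessimistic offline learning: under the hypotheses of the Option I offline pessimism theorem (r*(x,a) = ⟨θ*, φ(x,a)⟩, ‖θ̂ − θ*‖_Σ ≤ β, and π̂ ∈ Π maximizes ⟨θ̂, E_{x∼d0} φ(x,π)⟩ − β·‖E_{x∼d0} φ(x,π) − ν‖_{Σ^{-1}} − η·E_{x∼d0} KL(π(·|x)‖π0(·|x)) over Π), if moreover a reference policy π_ref belongs to Π and ν = E_{x∼d0} φ(x,π_ref), then J(π̂) ≥ J(π_ref). -/

import Mathlib

open Finset Matrix

/-- KL divergence between two distributions on a finite set. -/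
noncomputable def KL {A : Type*} [Fintype A] (p q : A → ℝ) : ℝ :=
  ∑ a, p a * Real.log (p a / q a)

/-- KL-regularized value of a policy. -/
noncomputable def J {X A : Type*} [Fintype X] [Fintype A]
    (d0 : X → ℝ) (pi0 : X → A → ℝ) (η : ℝ) (rstar : X → A → ℝ)
    (p : X → A → ℝ) : ℝ :=
  ∑ x, d0 x * ((∑ a, p x a * rstar x a) - η * KL (p x) (pi0 x))

/-- The matrix-weighted norm ‖v‖_M = √(vᵀ M v). -/
noncomputable def matNorm {d : ℕ} (M : Matrix (Fin d) (Fin d) ℝ) (v : Fin d → ℝ) : ℝ :=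
  Real.sqrt (v ⬝ᵥ M.mulVec v)

/-- Expected feature vector E_{x∼d0, a∼p(·|x)} φ(x,a). -/
noncomputable def featMean {X A : Type*} [Fintype X] [Fintype A] {d : ℕ}
    (d0 : X → ℝ) (φ : X → A → Fin d → ℝ) (p : X → A → ℝ) : Fin d → ℝ :=
  ∑ x, d0 x • ∑ a, p x a • φ x a

lemma matNorm_nonneg {d : ℕ} (M : Matrix (Fin d) (Fin d) ℝ) (v : Fin d → ℝ) :
    0 ≤ matNorm M v := Real.sqrt_nonneg _

lemma cs_matNorm {d : ℕ} {M : Matrix (Fin d) (Fin d) ℝ} (hM : M.PosDef)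
    (w z : Fin d → ℝ) : w ⬝ᵥ z ≤ matNorm M w * matNorm M⁻¹ z := by
  set z' := M⁻¹.mulVec z with hz'
  have hdet : IsUnit M.det := hM.det_pos.ne'.isUnit
  have hMz' : M.mulVec z' = z := by
    rw [hz', Matrix.mulVec_mulVec, Matrix.mul_nonsing_inv _ hdet, Matrix.one_mulVec]
  have hT : Mᵀ = M := by
    have h := hM.isHermitian
    rwa [Matrix.IsHermitian, Matrix.conjTranspose_eq_transpose_of_trivial] at h
  have hsymm : z' ⬝ᵥ M.mulVec w = w ⬝ᵥ z := by
    rw [Matrix.dotProduct_mulVec, ← Matrix.mulVec_transpose, hT, hMz',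
      dotProduct_comm]
  have hwz : w ⬝ᵥ M.mulVec z' = w ⬝ᵥ z := by rw [hMz']
  have hz'z : z' ⬝ᵥ M.mulVec z' = z ⬝ᵥ M⁻¹.mulVec z := by
    rw [hMz', dotProduct_comm]
  have hquad : ∀ t : ℝ,
      0 ≤ (z ⬝ᵥ M⁻¹.mulVec z) * (t * t) + (2 * (w ⬝ᵥ z)) * t + (w ⬝ᵥ M.mulVec w) := by
    intro t
    have h := hM.posSemidef.dotProduct_mulVec_nonneg (w + t • z')
    simp only [star_trivial] at h
    simp only [Matrix.mulVec_add, Matrix.mulVec_smul, add_dotProduct,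
      dotProduct_add, smul_dotProduct, dotProduct_smul,
      smul_eq_mul] at h
    rw [hsymm, hwz, hz'z] at h
    nlinarith [h]
  have hdisc := discrim_le_zero hquad
  rw [discrim] at hdisc
  have ha : 0 ≤ w ⬝ᵥ M.mulVec w := hM.posSemidef.dotProduct_mulVec_nonneg w
  have hb : 0 ≤ z ⬝ᵥ M⁻¹.mulVec z := hM.inv.posSemidef.dotProduct_mulVec_nonneg z
  have hsa := Real.sq_sqrt ha
  have hsb := Real.sq_sqrt hb
  have hna := Real.sqrt_nonneg (w ⬝ᵥ M.mulVec w)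
  have hnb := Real.sqrt_nonneg (z ⬝ᵥ M⁻¹.mulVec z)
  unfold matNorm
  calc w ⬝ᵥ z ≤ |w ⬝ᵥ z| := le_abs_self _
    _ = Real.sqrt ((w ⬝ᵥ z) ^ 2) := (Real.sqrt_sq_eq_abs _).symm
    _ ≤ Real.sqrt ((w ⬝ᵥ M.mulVec w) * (z ⬝ᵥ M⁻¹.mulVec z)) :=
        Real.sqrt_le_sqrt (by nlinarith [hdisc])
    _ = Real.sqrt (w ⬝ᵥ M.mulVec w) * Real.sqrt (z ⬝ᵥ M⁻¹.mulVec z) := Real.sqrt_mul ha _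

lemma J_dot {X A : Type*} [Fintype X] [Fintype A] {d : ℕ}
    (d0 : X → ℝ) (pi0 : X → A → ℝ) (η : ℝ) (φ : X → A → Fin d → ℝ)
    (θ : Fin d → ℝ) (p : X → A → ℝ) :
    J d0 pi0 η (fun x a => θ ⬝ᵥ φ x a) p
      = θ ⬝ᵥ featMean d0 φ p - η * ∑ x, d0 x * KL (p x) (pi0 x) := by
  let l : (Fin d → ℝ) →ₗ[ℝ] ℝ :=
    { toFun := fun v => θ ⬝ᵥ v
      map_add' := fun a b => dotProduct_add θ a b
      map_smul' := fun c v => by simp [dotProduct_smul] }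
  have hl : ∀ v, l v = θ ⬝ᵥ v := fun v => rfl
  have h1 : θ ⬝ᵥ featMean d0 φ p = ∑ x, d0 x * ∑ a, p x a * (θ ⬝ᵥ φ x a) := by
    rw [← hl, featMean, map_sum]
    refine Finset.sum_congr rfl fun x _ => ?_
    rw [_root_.map_smul, map_sum, smul_eq_mul]
    congr 1
    refine Finset.sum_congr rfl fun a _ => ?_
    rw [_root_.map_smul, smul_eq_mul, hl]
  simp only [_root_.J]
  rw [h1, Finset.mul_sum, ← Finset.sum_sub_distrib]
  exact Finset.sum_congr rfl fun x _ => by ring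

theorem robust_policy_improvement
    {X A : Type*} [Fintype X] [Fintype A] {d : ℕ}
    (d0 : X → ℝ) (hd0 : ∀ x, 0 ≤ d0 x) (hd0sum : ∑ x, d0 x = 1)
    (η : ℝ) (hη : 0 < η)
    (pi0 : X → A → ℝ) (hpi0pos : ∀ x a, 0 < pi0 x a) (hpi0sum : ∀ x, ∑ a, pi0 x a = 1)
    (φ : X → A → Fin d → ℝ)
    (θstar θhat : Fin d → ℝ)
    (Sig : Matrix (Fin d) (Fin d) ℝ) (hSig : Sig.PosDef)
    (β : ℝ) (hβ : 0 ≤ β)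
    (hest : matNorm Sig (θhat - θstar) ≤ β)
    (ν : Fin d → ℝ)
    (Pol : Set (X → A → ℝ))
    (hPol : ∀ p ∈ Pol, (∀ x a, 0 ≤ p x a) ∧ (∀ x, ∑ a, p x a = 1)
      ∧ (∀ x a, p x a ≠ 0 → pi0 x a ≠ 0))
    (phat : X → A → ℝ) (hphatmem : phat ∈ Pol)
    (hmax : ∀ p ∈ Pol,
      (θhat ⬝ᵥ featMean d0 φ p) - β * matNorm Sig⁻¹ (featMean d0 φ p - ν)
          - η * ∑ x, d0 x * KL (p x) (pi0 x)
        ≤ (θhat ⬝ᵥ featMean d0 φ phat) - β * matNorm Sig⁻¹ (featMean d0 φ phat - ν)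
          - η * ∑ x, d0 x * KL (phat x) (pi0 x))
    (pref : X → A → ℝ) (hprefmem : pref ∈ Pol)
    (hν : ν = featMean d0 φ pref) :
    J d0 pi0 η (fun x a => θstar ⬝ᵥ φ x a) pref
      ≤ J d0 pi0 η (fun x a => θstar ⬝ᵥ φ x a) phat := by
  have hJh := J_dot d0 pi0 η φ θstar phat
  have hJr := J_dot d0 pi0 η φ θstar pref
  rw [← hν] at hJr
  have hmax' := hmax pref hprefmem
  have h0 : matNorm Sig⁻¹ (ν - ν) = 0 := by
    rw [sub_self]
    simp [matNorm]
  rw [← hν, h0, mul_zero] at hmax'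
  have hn : 0 ≤ matNorm Sig⁻¹ (featMean d0 φ phat - ν) := matNorm_nonneg _ _
  have hcs := cs_matNorm hSig (θhat - θstar) (featMean d0 φ phat - ν)
  have hb : matNorm Sig (θhat - θstar) * matNorm Sig⁻¹ (featMean d0 φ phat - ν)
      ≤ β * matNorm Sig⁻¹ (featMean d0 φ phat - ν) :=
    mul_le_mul_of_nonneg_right hest hn
  have hexp : (θhat - θstar) ⬝ᵥ (featMean d0 φ phat - ν)
      = θhat ⬝ᵥ featMean d0 φ phat - θhat ⬝ᵥ ν
        - θstar ⬝ᵥ featMean d0 φ phat + θstar ⬝ᵥ ν := by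
    rw [sub_dotProduct, dotProduct_sub, dotProduct_sub]
    ring
  linarith [hJh, hJr, hmax', hcs, hb, hexp]
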